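/- arXiv:2501.03099 — 4 statements merged into one kernel-verified Lean document; each statement's English description precedes it below -/
import Mathlib

section
/- For every integer c ≥ 6, the unique solution of the recursion Z(c) = Z(c−1) + 2·Z(c−2) + 2·j(c−6) + 2·(−1)^c·[3 ∣ c] with initial conditions Z(6)=2 and Z(7)=4 is Z(c) = ((3c−8)/27)·2^{c−4} + (14/27)·(−1)^c − (2/3)·(−1)^c·[c ≡ 1 mod 3], where [P] denotes 1 if P holds and 0 otherwise. -/
def jac (c : ℕ) : ℤ := (2 ^ c - (-1 : ℤ) ^ c) / 3

lemma jac_cast (n : ℕ) : (jac n : ℚ) = ((2:ℚ) ^ n - (-1 : ℚ) ^ n) / 3 := by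
  have hdvd : (3:ℤ) ∣ 2 ^ n - (-1) ^ n := by
    have h : (2:ℤ) ^ n ≡ (-1) ^ n [ZMOD 3] := Int.ModEq.pow n (by decide)
    exact h.symm.dvd
  obtain ⟨k, hk⟩ := hdvd
  have : jac n = k := by
    unfold jac
    rw [hk, Int.mul_ediv_cancel_left _ (by norm_num)]
  rw [this]
  have hq : ((2:ℚ) ^ n - (-1:ℚ) ^ n) = 3 * (k : ℚ) := by
    have := congrArg (fun x : ℤ => (x : ℚ)) hk
    push_cast at this
    linarith
  rw [hq]; ring

theorem Z_closed_form (Z : ℕ → ℚ)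
    (h6 : Z 6 = 2) (h7 : Z 7 = 4)
    (hrec : ∀ c : ℕ, 8 ≤ c →
      Z c = Z (c - 1) + 2 * Z (c - 2) + 2 * (jac (c - 6) : ℚ)
        + 2 * (-1 : ℚ) ^ c * (if 3 ∣ c then 1 else 0)) :
    ∀ c : ℕ, 6 ≤ c →
      Z c = ((3 * (c : ℚ) - 8) / 27) * 2 ^ (c - 4) + (14 / 27) * (-1 : ℚ) ^ c
        - (2 / 3) * (-1 : ℚ) ^ c * (if c % 3 = 1 then 1 else 0) := by
  set F : ℕ → ℚ := fun c => ((3 * (c : ℚ) - 8) / 27) * 2 ^ (c - 4) + (14 / 27) * (-1 : ℚ) ^ c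
        - (2 / 3) * (-1 : ℚ) ^ c * (if c % 3 = 1 then 1 else 0) with hF
  have key : ∀ n : ℕ, Z (n + 6) = F (n + 6) ∧ Z (n + 7) = F (n + 7) := by
    intro n
    induction n with
    | zero =>
      constructor
      · simp [hF, h6]; norm_num
      · simp [hF, h7]; norm_num
    | succ m ih =>
      obtain ⟨ih6, ih7⟩ := ih
      refine ⟨by simpa using ih7, ?_⟩
      have hr := hrec (m + 8) (by omega)
      have e1 : m + 8 - 1 = m + 7 := by omega
      have e2 : m + 8 - 2 = m + 6 := by omega
      have e3 : m + 8 - 6 = m + 2 := by omega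
      rw [e1, e2, e3, ih6, ih7, jac_cast] at hr
      have : Z (m + 1 + 7) = Z (m + 8) := by norm_num
      rw [this, hr, hF]
      have e4 : m + 1 + 7 - 4 = m + 4 := by omega
      have e5 : m + 7 - 4 = m + 3 := by omega
      have e6 : m + 6 - 4 = m + 2 := by omega
      simp only [e4, e5, e6]
      rcases (show m % 3 = 0 ∨ m % 3 = 1 ∨ m % 3 = 2 by omega) with h | h | h
      · simp only [show (m+1+7) % 3 = 2 from by omega, show (m+7) % 3 = 1 from by omega,
          show (m+6) % 3 = 0 from by omega, show ¬ (3 ∣ m + 8) from by omega,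
          if_pos, if_neg, reduceCtorEq]
        push_cast
        ring
      · simp only [show (m+1+7) % 3 = 0 from by omega, show (m+7) % 3 = 2 from by omega,
          show (m+6) % 3 = 1 from by omega, show (3 ∣ m + 8) from by omega,
          if_pos, if_neg, reduceCtorEq]
        push_cast
        ring
      · simp only [show (m+1+7) % 3 = 1 from by omega, show (m+7) % 3 = 0 from by omega,
          show (m+6) % 3 = 2 from by omega, show ¬ (3 ∣ m + 8) from by omega,
          if_pos, if_neg, reduceCtorEq]
        push_cast
        ring
  intro c hc
  obtain ⟨n, rfl⟩ : ∃ n, c = n + 6 := ⟨c - 6, by omega⟩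
  exact (key n).1
end

section
/- Let F(c) = |E(c)| where E(c) is the set of tuples (e_1,…,e_k) of even integers with each |e_i| ≥ 4 and c = Σ|e_i| − #{i < k : sign(e_i) = sign(e_{i+1})}. Then F satisfies F(c) = F(c−2) + F(c−3) + F(c−4) for all c ≥ 8, with F(4)=2, F(5)=0, F(6)=2, F(7)=2. -/
/-- `Eset c` is the set of nonempty tuples of even integers `e_i` with `|e_i| ≥ 4`
and `c = Σ|e_i| − #{i : sign e_i = sign e_{i+1}}`. -/
def Eset (c : ℕ) : Set (List ℤ) :=
  {l | l ≠ [] ∧ (∀ e ∈ l, Even e ∧ 4 ≤ |e|) ∧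
    (c : ℤ) = (l.map (fun e => |e|)).sum
      - ((l.zip l.tail).filter (fun p => p.1.sign == p.2.sign)).length}

noncomputable def Fcard (c : ℕ) : ℕ := Nat.card (Eset c)

def cost (l : List ℤ) : ℤ := (l.map (fun e => |e|)).sum
      - ((l.zip l.tail).filter (fun p => p.1.sign == p.2.sign)).length

lemma mem_Eset {c : ℕ} {l : List ℤ} :
    l ∈ Eset c ↔ l ≠ [] ∧ (∀ e ∈ l, Even e ∧ 4 ≤ |e|) ∧ (c : ℤ) = cost l := Iff.rfl

lemma cost_singleton (e : ℤ) : cost [e] = |e| := by simp [cost]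

lemma cost_cons_cons (e f : ℤ) (t : List ℤ) :
    cost (e :: f :: t) = |e| + cost (f :: t) - (if e.sign = f.sign then 1 else 0) := by
  simp only [cost, List.tail_cons, List.zip_cons_cons, List.filter_cons, List.map_cons,
    List.sum_cons]
  by_cases h : e.sign = f.sign <;> simp [h] <;> ring

lemma sign_cases (e : ℤ) (h : 4 ≤ |e|) :
    (e.sign = 1 ∧ |e| = e ∧ 4 ≤ e) ∨ (e.sign = -1 ∧ |e| = -e ∧ e ≤ -4) := by
  rcases abs_cases e with ⟨h1, h2⟩ | ⟨h1, h2⟩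
  · exact Or.inl ⟨Int.sign_eq_one_of_pos (by omega), h1, by omega⟩
  · exact Or.inr ⟨Int.sign_eq_neg_one_of_neg (by omega), h1, by omega⟩

lemma cost_lb (l : List ℤ) (hl : l ≠ []) (hv : ∀ e ∈ l, 4 ≤ |e|) :
    3 * l.length + 1 ≤ cost l := by
  induction l with
  | nil => simp at hl
  | cons e t ih =>
    match t with
    | [] =>
      have := hv e (by simp)
      simp [cost_singleton]; omega
    | f :: t' =>
      have h1 := ih (by simp) (fun x hx => hv x (by simp [hx]))
      have h2 := hv e (by simp)
      rw [cost_cons_cons]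
      simp only [List.length_cons] at *
      split <;> push_cast at * <;> omega

lemma length_bound {c : ℕ} {l : List ℤ} (h : l ∈ Eset c) : 3 * l.length + 1 ≤ c := by
  obtain ⟨hne, hv, hc⟩ := mem_Eset.mp h
  have := cost_lb l hne (fun e he => (hv e he).2)
  omega

lemma Eset_four : Eset 4 = {[4], [-4]} := by
  ext l
  constructor
  · intro hmem
    obtain ⟨hne, hv, hc⟩ := mem_Eset.mp hmem
    have hlen := length_bound hmem
    match l with
    | [e] =>
      have he := hv e (by simp)
      rw [cost_singleton] at hc
      have h4 : |e| = 4 := by exact_mod_cast hc.symm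
      rcases abs_cases e with ⟨h, _⟩ | ⟨h, _⟩ <;> simp_all <;> omega
    | e :: f :: t => simp only [List.length_cons] at hlen; omega
  · rintro (rfl | rfl) <;>
      exact mem_Eset.mpr ⟨by simp, by decide, by rw [cost_singleton]; decide⟩

lemma Eset_five : Eset 5 = ∅ := by
  ext l
  simp only [Set.mem_empty_iff_false, iff_false]
  intro hmem
  obtain ⟨hne, hv, hc⟩ := mem_Eset.mp hmem
  have hlen := length_bound hmem
  match l with
  | [e] =>
    have he := hv e (by simp)
    rw [cost_singleton] at hc
    have h5 : |e| = 5 := by exact_mod_cast hc.symm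
    obtain ⟨k, hk⟩ := even_abs.mpr he.1
    omega
  | e :: f :: t => simp only [List.length_cons] at hlen; omega

lemma Eset_six : Eset 6 = {[6], [-6]} := by
  ext l
  constructor
  · intro hmem
    obtain ⟨hne, hv, hc⟩ := mem_Eset.mp hmem
    have hlen := length_bound hmem
    match l with
    | [e] =>
      have he := hv e (by simp)
      rw [cost_singleton] at hc
      have h6 : |e| = 6 := by exact_mod_cast hc.symm
      rcases abs_cases e with ⟨h, _⟩ | ⟨h, _⟩ <;> simp_all <;> omega
    | e :: f :: t => simp only [List.length_cons] at hlen; omega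
  · rintro (rfl | rfl) <;>
      exact mem_Eset.mpr ⟨by simp, by decide, by rw [cost_singleton]; decide⟩

lemma Eset_seven : Eset 7 = {[4, 4], [-4, -4]} := by
  ext l
  constructor
  · intro hmem
    obtain ⟨hne, hv, hc⟩ := mem_Eset.mp hmem
    have hlen := length_bound hmem
    match l with
    | [e] =>
      have he := hv e (by simp)
      rw [cost_singleton] at hc
      have h7 : |e| = 7 := by exact_mod_cast hc.symm
      obtain ⟨k, hk⟩ := even_abs.mpr he.1
      omega
    | [e, f] =>
      have he := hv e (by simp)
      have hf := hv f (by simp)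
      rw [cost_cons_cons, cost_singleton] at hc
      obtain ⟨k, hk⟩ := even_abs.mpr he.1
      obtain ⟨m, hm⟩ := even_abs.mpr hf.1
      by_cases hs : e.sign = f.sign
      · rw [if_pos hs] at hc
        have h8 : |e| + |f| = 8 := by push_cast at hc; omega
        have he4 : |e| = 4 := by omega
        have hf4 : |f| = 4 := by omega
        simp only [Set.mem_insert_iff, Set.mem_singleton_iff, List.cons.injEq, and_true]
        rcases sign_cases e he.2 with ⟨s1, a1, _⟩ | ⟨s1, a1, _⟩ <;>
          rcases sign_cases f hf.2 with ⟨s2, a2, _⟩ | ⟨s2, a2, _⟩ <;>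
            rw [s1, s2] at hs <;> omega
      · rw [if_neg hs] at hc
        have : |e| + |f| = 7 := by push_cast at hc; omega
        omega
    | e :: f :: g :: t => simp only [List.length_cons] at hlen; omega
  · rintro (rfl | rfl) <;>
      refine mem_Eset.mpr ⟨by simp, by decide, ?_⟩ <;>
        rw [cost_cons_cons, cost_singleton] <;> norm_num

lemma even_add_mul_two (e s : ℤ) (h : Even e) : Even (e + 2 * s) := by
  rcases h with ⟨k, hk⟩; exact ⟨k + s, by omega⟩

lemma grow_head (e : ℤ) (h : 4 ≤ |e|) :
    (e + 2 * e.sign).sign = e.sign ∧ |e + 2 * e.sign| = |e| + 2 := by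
  rcases sign_cases e h with ⟨hs, ha, hb⟩ | ⟨hs, ha, hb⟩ <;> rw [hs]
  · exact ⟨Int.sign_eq_one_of_pos (by omega), by rw [abs_of_pos (by omega)]; omega⟩
  · exact ⟨Int.sign_eq_neg_one_of_neg (by omega), by rw [abs_of_neg (by omega)]; omega⟩

lemma shrink_head (e : ℤ) (h : 6 ≤ |e|) :
    (e - 2 * e.sign).sign = e.sign ∧ |e - 2 * e.sign| = |e| - 2
      ∧ (e - 2 * e.sign) + 2 * (e - 2 * e.sign).sign = e := by
  rcases sign_cases e (by omega) with ⟨hs, ha, hb⟩ | ⟨hs, ha, hb⟩ <;> rw [hs]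
  · have h1 : (e - 2 * 1).sign = 1 := Int.sign_eq_one_of_pos (by omega)
    exact ⟨h1, by rw [abs_of_pos (by omega)]; omega, by rw [h1]; ring⟩
  · have h1 : (e - 2 * (-1)).sign = -1 := Int.sign_eq_neg_one_of_neg (by omega)
    exact ⟨h1, by rw [abs_of_neg (by omega)]; omega, by rw [h1]; ring⟩

lemma four_sign (f : ℤ) (h : 4 ≤ |f|) :
    (4 * f.sign).sign = f.sign ∧ |4 * f.sign| = 4 ∧ Even (4 * f.sign) ∧
    (-4 * f.sign).sign = -f.sign ∧ |-4 * f.sign| = 4 ∧ Even (-4 * f.sign) := by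
  rcases sign_cases f h with ⟨hs, ha, hb⟩ | ⟨hs, ha, hb⟩ <;> rw [hs] <;> norm_num <;> decide

def grow : List ℤ → List ℤ
  | [] => []
  | e :: t => (e + 2 * e.sign) :: t

def app1 : List ℤ → List ℤ
  | [] => []
  | f :: t => (4 * f.sign) :: f :: t

def app2 : List ℤ → List ℤ
  | [] => []
  | f :: t => (-4 * f.sign) :: f :: t

lemma cost_head (x y : ℤ) (t : List ℤ) (hs : x.sign = y.sign) :
    cost (x :: t) = cost (y :: t) + |x| - |y| := by
  cases t with
  | nil => rw [cost_singleton, cost_singleton]; ring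
  | cons f t' => rw [cost_cons_cons, cost_cons_cons, hs]; ring

lemma grow_mem {c : ℕ} (hc : 2 ≤ c) {x : List ℤ} (hx : x ∈ Eset (c - 2)) :
    grow x ∈ Eset c := by
  obtain ⟨hne, hv, hcost⟩ := mem_Eset.mp hx
  match x with
  | e :: t =>
    have he := hv e (by simp)
    obtain ⟨hs, ha⟩ := grow_head e he.2
    refine mem_Eset.mpr ⟨by simp [grow], ?_, ?_⟩
    · intro a hamem
      rcases List.mem_cons.mp hamem with rfl | hamem
      · exact ⟨even_add_mul_two e e.sign he.1, by omega⟩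
      · exact hv a (by simp [hamem])
    · show (c : ℤ) = cost ((e + 2 * e.sign) :: t)
      rw [cost_head _ e t hs, ha]
      rw [Nat.cast_sub hc] at hcost
      push_cast at hcost ⊢
      omega

lemma app1_mem {c : ℕ} (hc : 3 ≤ c) {x : List ℤ} (hx : x ∈ Eset (c - 3)) :
    app1 x ∈ Eset c := by
  obtain ⟨hne, hv, hcost⟩ := mem_Eset.mp hx
  match x with
  | f :: t =>
    have hf := hv f (by simp)
    obtain ⟨hs, ha, hev, _, _, _⟩ := four_sign f hf.2
    refine mem_Eset.mpr ⟨by simp [app1], ?_, ?_⟩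
    · intro a hamem
      rcases List.mem_cons.mp hamem with rfl | hamem
      · exact ⟨hev, by omega⟩
      · exact hv a hamem
    · show (c : ℤ) = cost ((4 * f.sign) :: f :: t)
      rw [cost_cons_cons, if_pos hs, ha]
      rw [Nat.cast_sub hc] at hcost
      push_cast at hcost ⊢
      omega

lemma app2_mem {c : ℕ} (hc : 4 ≤ c) {x : List ℤ} (hx : x ∈ Eset (c - 4)) :
    app2 x ∈ Eset c := by
  obtain ⟨hne, hv, hcost⟩ := mem_Eset.mp hx
  match x with
  | f :: t =>
    have hf := hv f (by simp)
    obtain ⟨_, _, _, hs, ha, hev⟩ := four_sign f hf.2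
    have hsne : (-4 * f.sign).sign ≠ f.sign := by
      rcases sign_cases f hf.2 with ⟨h1, _, _⟩ | ⟨h1, _, _⟩ <;> rw [hs, h1] <;> norm_num
    refine mem_Eset.mpr ⟨by simp [app2], ?_, ?_⟩
    · intro a hamem
      rcases List.mem_cons.mp hamem with rfl | hamem
      · exact ⟨hev, by omega⟩
      · exact hv a hamem
    · show (c : ℤ) = cost ((-4 * f.sign) :: f :: t)
      rw [cost_cons_cons, if_neg hsne, ha]
      rw [Nat.cast_sub hc] at hcost
      push_cast at hcost ⊢
      omega

lemma Eset_decomp {c : ℕ} (hc : 8 ≤ c) :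
    Eset c = grow '' Eset (c - 2) ∪ app1 '' Eset (c - 3) ∪ app2 '' Eset (c - 4) := by
  ext l
  constructor
  · intro hmem
    obtain ⟨hne, hv, hcost⟩ := mem_Eset.mp hmem
    match l with
    | e :: t =>
      have he := hv e (by simp)
      by_cases h6 : 6 ≤ |e|
      · left; left
        obtain ⟨hs, ha, hg⟩ := shrink_head e h6
        refine ⟨(e - 2 * e.sign) :: t, mem_Eset.mpr ⟨by simp, ?_, ?_⟩, ?_⟩
        · intro a hamem
          rcases List.mem_cons.mp hamem with rfl | hamem
          · refine ⟨?_, by omega⟩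
            have : e - 2 * e.sign = e + 2 * (-e.sign) := by ring
            rw [this]; exact even_add_mul_two e (-e.sign) he.1
          · exact hv a (by simp [hamem])
        · show ((c - 2 : ℕ) : ℤ) = cost ((e - 2 * e.sign) :: t)
          rw [cost_head _ e t hs, ha, Nat.cast_sub (by omega)]
          push_cast at hcost ⊢
          omega
        · show grow ((e - 2 * e.sign) :: t) = e :: t
          simp only [grow, hg]
      · have h4 : |e| = 4 := by
          obtain ⟨k, hk⟩ := even_abs.mpr he.1
          have := he.2
          omega
        match t with
        | [] =>
          exfalso
          rw [cost_singleton, h4] at hcost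
          omega
        | f :: t' =>
          have hf := hv f (by simp)
          by_cases hs : e.sign = f.sign
          · left; right
            have hef : e = 4 * f.sign := by
              rcases sign_cases e he.2 with ⟨s1, a1, _⟩ | ⟨s1, a1, _⟩ <;>
                rcases sign_cases f hf.2 with ⟨s2, a2, _⟩ | ⟨s2, a2, _⟩ <;>
                  rw [s2] <;> rw [s1, s2] at hs <;> omega
            refine ⟨f :: t', mem_Eset.mpr ⟨by simp, fun a ha => hv a (by simp [ha]), ?_⟩,
              by simp only [app1]; rw [← hef]⟩
            rw [cost_cons_cons, if_pos hs, h4] at hcost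
            rw [Nat.cast_sub (by omega)]
            push_cast at hcost ⊢
            omega
          · right
            have hef : e = -4 * f.sign := by
              rcases sign_cases e he.2 with ⟨s1, a1, _⟩ | ⟨s1, a1, _⟩ <;>
                rcases sign_cases f hf.2 with ⟨s2, a2, _⟩ | ⟨s2, a2, _⟩ <;>
                  rw [s2] <;> rw [s1, s2] at hs <;> omega
            refine ⟨f :: t', mem_Eset.mpr ⟨by simp, fun a ha => hv a (by simp [ha]), ?_⟩,
              by simp only [app2]; rw [← hef]⟩
            rw [cost_cons_cons, if_neg hs, h4] at hcost
            rw [Nat.cast_sub (by omega)]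
            push_cast at hcost ⊢
            omega
  · rintro ((⟨x, hx, rfl⟩ | ⟨x, hx, rfl⟩) | ⟨x, hx, rfl⟩)
    · exact grow_mem (by omega) hx
    · exact app1_mem (by omega) hx
    · exact app2_mem (by omega) hx
lemma finite_bounded (s : Set ℤ) (hs : s.Finite) (n : ℕ) :
    {l : List ℤ | l.length ≤ n ∧ ∀ e ∈ l, e ∈ s}.Finite := by
  have : Finite s := hs
  apply Set.Finite.subset ((List.finite_length_le s n).image (fun l => l.map Subtype.val))
  rintro l ⟨h1, h2⟩
  refine ⟨l.attach.map (fun e => ⟨e.1, h2 e.1 e.2⟩), by simpa using h1, ?_⟩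
  simp [List.map_map]

lemma Eset_finite (c : ℕ) : (Eset c).Finite := by
  apply Set.Finite.subset (finite_bounded (Set.Icc (-(2*(c:ℤ))) (2*c)) (Set.finite_Icc _ _) c)
  rintro l ⟨hne, hv, hc⟩
  have hlb := cost_lb l hne (fun e he => (hv e he).2)
  simp only [cost] at hlb hc
  have hcount : (((l.zip l.tail).filter (fun p => p.1.sign == p.2.sign)).length)
      ≤ l.length := by
    refine le_trans (List.length_filter_le _ _) ?_
    rw [List.length_zip]; omega
  constructor
  · omega
  · intro e he
    have hsum : |e| ≤ (l.map (fun e => |e|)).sum := by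
      apply List.single_le_sum (by simp) _ (List.mem_map_of_mem he)
    simp only [Set.mem_Icc]
    rw [abs_le] at hsum
    omega

lemma grow_injOn (m : ℕ) : Set.InjOn grow (Eset m) := by
  rintro x hx y hy hxy
  obtain ⟨hnex, hvx, -⟩ := mem_Eset.mp hx
  obtain ⟨hney, hvy, -⟩ := mem_Eset.mp hy
  match x, y with
  | e :: t, e' :: t' =>
    have he := hvx e (by simp)
    have he' := hvy e' (by simp)
    simp only [grow, List.cons.injEq] at hxy
    obtain ⟨h1, rfl⟩ := hxy
    have hsign : e.sign = e'.sign := by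
      rw [← (grow_head e he.2).1, ← (grow_head e' he'.2).1, h1]
    rw [hsign] at h1
    have : e = e' := by omega
    rw [this]

lemma app1_injOn (m : ℕ) : Set.InjOn app1 (Eset m) := by
  rintro x hx y hy hxy
  obtain ⟨hnex, -, -⟩ := mem_Eset.mp hx
  obtain ⟨hney, -, -⟩ := mem_Eset.mp hy
  match x, y with
  | e :: t, e' :: t' =>
    simp only [app1, List.cons.injEq] at hxy
    rw [hxy.2.1, hxy.2.2]

lemma app2_injOn (m : ℕ) : Set.InjOn app2 (Eset m) := by
  rintro x hx y hy hxy
  obtain ⟨hnex, -, -⟩ := mem_Eset.mp hx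
  obtain ⟨hney, -, -⟩ := mem_Eset.mp hy
  match x, y with
  | e :: t, e' :: t' =>
    simp only [app2, List.cons.injEq] at hxy
    rw [hxy.2.1, hxy.2.2]

lemma disj_grow_app1 (a b : ℕ) : Disjoint (grow '' Eset a) (app1 '' Eset b) := by
  rw [Set.disjoint_left]
  rintro l ⟨x, hx, rfl⟩ ⟨y, hy, heq⟩
  obtain ⟨hnex, hvx, -⟩ := mem_Eset.mp hx
  obtain ⟨hney, hvy, -⟩ := mem_Eset.mp hy
  match x, y with
  | e :: t, f :: u =>
    have he := hvx e (by simp)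
    have hf := hvy f (by simp)
    simp only [grow, app1, List.cons.injEq] at heq
    have h1 := (grow_head e he.2).2
    have h2 := (four_sign f hf.2).2.1
    rw [heq.1] at h2
    omega

lemma disj_grow_app2 (a b : ℕ) : Disjoint (grow '' Eset a) (app2 '' Eset b) := by
  rw [Set.disjoint_left]
  rintro l ⟨x, hx, rfl⟩ ⟨y, hy, heq⟩
  obtain ⟨hnex, hvx, -⟩ := mem_Eset.mp hx
  obtain ⟨hney, hvy, -⟩ := mem_Eset.mp hy
  match x, y with
  | e :: t, f :: u =>
    have he := hvx e (by simp)
    have hf := hvy f (by simp)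
    simp only [grow, app2, List.cons.injEq] at heq
    have h1 := (grow_head e he.2).2
    have h2 := (four_sign f hf.2).2.2.2.2.1
    rw [heq.1] at h2
    omega

lemma disj_app1_app2 (a b : ℕ) : Disjoint (app1 '' Eset a) (app2 '' Eset b) := by
  rw [Set.disjoint_left]
  rintro l ⟨x, hx, rfl⟩ ⟨y, hy, heq⟩
  obtain ⟨hnex, hvx, -⟩ := mem_Eset.mp hx
  obtain ⟨hney, hvy, -⟩ := mem_Eset.mp hy
  match x, y with
  | f :: t, g :: u =>
    have hf := hvx f (by simp)
    simp only [app1, app2, List.cons.injEq] at heq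
    obtain ⟨h1, rfl, -⟩ := heq
    rcases sign_cases g hf.2 with ⟨s1, -, -⟩ | ⟨s1, -, -⟩ <;> rw [s1] at h1 <;> omega

theorem Fcard_recursion :
    Fcard 4 = 2 ∧ Fcard 5 = 0 ∧ Fcard 6 = 2 ∧ Fcard 7 = 2 ∧
      ∀ c : ℕ, 8 ≤ c → Fcard c = Fcard (c - 2) + Fcard (c - 3) + Fcard (c - 4) := by
  refine ⟨?_, ?_, ?_, ?_, ?_⟩
  · rw [Fcard, Nat.card_coe_set_eq, Eset_four]
    exact Set.ncard_pair (by simp)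
  · rw [Fcard, Nat.card_coe_set_eq, Eset_five, Set.ncard_empty]
  · rw [Fcard, Nat.card_coe_set_eq, Eset_six]
    exact Set.ncard_pair (by simp)
  · rw [Fcard, Nat.card_coe_set_eq, Eset_seven]
    exact Set.ncard_pair (by simp)
  · intro c hc
    have f2 := Eset_finite (c - 2)
    have f3 := Eset_finite (c - 3)
    have f4 := Eset_finite (c - 4)
    rw [Fcard, Fcard, Fcard, Fcard, Nat.card_coe_set_eq, Nat.card_coe_set_eq,
      Nat.card_coe_set_eq, Nat.card_coe_set_eq, Eset_decomp hc,
      Set.ncard_union_eq (Set.disjoint_union_left.mpr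
          ⟨disj_grow_app2 _ _, disj_app1_app2 _ _⟩)
        ((f2.image _).union (f3.image _)) (f4.image _),
      Set.ncard_union_eq (disj_grow_app1 _ _) (f2.image _) (f3.image _),
      Set.ncard_image_of_injOn (grow_injOn _), Set.ncard_image_of_injOn (app1_injOn _),
      Set.ncard_image_of_injOn (app2_injOn _)]
end

section
/- Let T(c) be the set of tuples (b_1,…,b_k) of integers with every b_i ≥ 2 and Σ b_i − (k−1) = c. The map g defined by: g(b_1,…,b_{k−2},2,2) = (b_1,…,b_{k−2}); g(b_1,…,b_{k−1},2) = (b_1,…,b_{k−1}−1,2) when b_{k−1} ≥ 3; g(b_1,…,b_{k−1},3) = (b_1,…,b_{k−1}+1); g(b_1,…,b_{k−1},b_k) = (b_1,…,b_{k−1},b_k−2) when b_k ≥ 4, is a bijection from T(c) onto T(c−2) ⊔ T(c−1) ⊔ T(c−2) for c ≥ 5 (the first and fourth cases land in the two copies of T(c−2); the second and third in T(c−1)). -/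
/-- `Tset c` is the set of nonempty tuples `(b_1,…,b_k)` of integers with each
`b_i ≥ 2` and `Σ b_i − (k−1) = c`. -/
def Tset (c : ℕ) : Set (List ℤ) :=
  {l | l ≠ [] ∧ (∀ b ∈ l, 2 ≤ b) ∧ l.sum - ((l.length : ℤ) - 1) = (c : ℤ)}

/-- The map `g` acting on the reversed tuple: the four cases correspond to
tuples ending in `(2,2)`; in `(b,2)` with `b ≥ 3`; in `3`; and in `b_k ≥ 4`. -/
def gAux : List ℤ → List ℤ ⊕ List ℤ ⊕ List ℤ
  | 2 :: 2 :: rest => Sum.inl rest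
  | 2 :: b :: rest => Sum.inr (Sum.inl (2 :: (b - 1) :: rest))
  | 3 :: b :: rest => Sum.inr (Sum.inl ((b + 1) :: rest))
  | b :: rest => Sum.inr (Sum.inr ((b - 2) :: rest))
  | [] => Sum.inr (Sum.inr [])

def g (l : List ℤ) : List ℤ ⊕ List ℤ ⊕ List ℤ :=
  Sum.map List.reverse (Sum.map List.reverse List.reverse) (gAux l.reverse)

/-- The target `T(c−2) ⊔ T(c−1) ⊔ T(c−2)`: the first and fourth cases of `g`
land in the two copies of `T(c−2)`, the second and third in `T(c−1)`. -/
def target (c : ℕ) : Set (List ℤ ⊕ List ℤ ⊕ List ℤ) :=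
  {x | match x with
       | Sum.inl l => l ∈ Tset (c - 2)
       | Sum.inr (Sum.inl l) => l ∈ Tset (c - 1)
       | Sum.inr (Sum.inr l) => l ∈ Tset (c - 2)}

/-! ### Auxiliary lemmas -/

lemma gAux_eq1 (r : List ℤ) : gAux (2 :: 2 :: r) = Sum.inl r := rfl

lemma gAux_eq2 (b : ℤ) (r : List ℤ) (h : b ≠ 2) :
    gAux (2 :: b :: r) = Sum.inr (Sum.inl (2 :: (b - 1) :: r)) := by
  simp [gAux, h]

lemma gAux_eq3 (b : ℤ) (r : List ℤ) :
    gAux (3 :: b :: r) = Sum.inr (Sum.inl ((b + 1) :: r)) := rfl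

lemma gAux_eq4 (a : ℤ) (r : List ℤ) (h2 : a ≠ 2) (h3 : a ≠ 3) :
    gAux (a :: r) = Sum.inr (Sum.inr ((a - 2) :: r)) := by
  simp [gAux, h2, h3]

lemma gAux_eq4' (a : ℤ) : gAux [a] = Sum.inr (Sum.inr [a - 2]) := by
  simp [gAux]

/-- The inverse of `gAux`. -/
def gAuxInv : List ℤ ⊕ List ℤ ⊕ List ℤ → List ℤ
  | Sum.inl l => 2 :: 2 :: l
  | Sum.inr (Sum.inl (2 :: b :: rest)) => 2 :: (b + 1) :: rest
  | Sum.inr (Sum.inl (b :: rest)) => 3 :: (b - 1) :: rest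
  | Sum.inr (Sum.inl []) => []
  | Sum.inr (Sum.inr (b :: rest)) => (b + 2) :: rest
  | Sum.inr (Sum.inr []) => []

lemma gAuxInv_eq1 (l : List ℤ) : gAuxInv (Sum.inl l) = 2 :: 2 :: l := rfl

lemma gAuxInv_eq2 (b : ℤ) (r : List ℤ) :
    gAuxInv (Sum.inr (Sum.inl (2 :: b :: r))) = 2 :: (b + 1) :: r := rfl

lemma gAuxInv_eq3 (a : ℤ) (r : List ℤ) (h : a ≠ 2) :
    gAuxInv (Sum.inr (Sum.inl (a :: r))) = 3 :: (a - 1) :: r := by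
  rcases r with _ | ⟨x, r⟩ <;> simp [gAuxInv, h]

lemma gAuxInv_eq4 (a : ℤ) (r : List ℤ) :
    gAuxInv (Sum.inr (Sum.inr (a :: r))) = (a + 2) :: r := rfl

lemma mem_Tset {c : ℕ} {l : List ℤ} :
    l ∈ Tset c ↔ l ≠ [] ∧ (∀ b ∈ l, 2 ≤ b) ∧ l.sum - ((l.length : ℤ) - 1) = (c : ℤ) :=
  Iff.rfl

lemma Tset_reverse {c : ℕ} {l : List ℤ} : l.reverse ∈ Tset c ↔ l ∈ Tset c := by
  simp [mem_Tset, List.sum_reverse]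

lemma gAux_mapsTo {c : ℕ} (hc : 5 ≤ c) : Set.MapsTo gAux (Tset c) (target c) := by
  rintro l ⟨hne, hall, hsum⟩
  rcases l with _ | ⟨a, t⟩
  · exact absurd rfl hne
  rcases t with _ | ⟨b, t⟩
  · -- single element: a = c ≥ 5
    simp only [List.sum_cons, List.sum_nil, List.length_cons, List.length_nil] at hsum
    rw [gAux_eq4']
    refine ⟨by simp, ?_, ?_⟩
    · intro x hx
      simp only [List.mem_cons, List.not_mem_nil, or_false] at hx
      subst hx; omega
    · simp only [List.sum_cons, List.sum_nil, List.length_cons, List.length_nil]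
      push_cast; omega
  · have ha : 2 ≤ a := hall a (by simp)
    have hb : 2 ≤ b := hall b (by simp)
    have ht : ∀ x ∈ t, 2 ≤ x := fun x hx => hall x (by simp [hx])
    simp only [List.sum_cons, List.length_cons] at hsum
    by_cases ha2 : a = 2
    · subst ha2
      by_cases hb2 : b = 2
      · subst hb2
        rw [gAux_eq1]
        refine ⟨?_, ht, ?_⟩
        · rintro rfl
          simp only [List.sum_nil, List.length_nil] at hsum
          omega
        · push_cast at hsum ⊢; omega
      · rw [gAux_eq2 b t hb2]
        refine ⟨by simp, ?_, ?_⟩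
        · intro x hx
          simp only [List.mem_cons] at hx
          rcases hx with rfl | rfl | hx
          · omega
          · omega
          · exact ht x hx
        · simp only [List.sum_cons, List.length_cons]
          push_cast at hsum ⊢; omega
    · by_cases ha3 : a = 3
      · subst ha3
        rw [gAux_eq3]
        refine ⟨by simp, ?_, ?_⟩
        · intro x hx
          simp only [List.mem_cons] at hx
          rcases hx with rfl | hx
          · omega
          · exact ht x hx
        · simp only [List.sum_cons, List.length_cons]
          push_cast at hsum ⊢; omega
      · rw [gAux_eq4 a (b :: t) ha2 ha3]
        refine ⟨by simp, ?_, ?_⟩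
        · intro x hx
          simp only [List.mem_cons] at hx
          rcases hx with rfl | rfl | hx
          · omega
          · omega
          · exact ht x hx
        · simp only [List.sum_cons, List.length_cons]
          push_cast at hsum ⊢; omega

lemma gAuxInv_mapsTo {c : ℕ} (hc : 5 ≤ c) : Set.MapsTo gAuxInv (target c) (Tset c) := by
  rintro (l | l | l) hx
  · obtain ⟨hne, hall, hsum⟩ := hx
    rw [gAuxInv_eq1]
    refine ⟨by simp, ?_, ?_⟩
    · intro x hx
      simp only [List.mem_cons] at hx
      rcases hx with rfl | rfl | hx
      · omega
      · omega
      · exact hall x hx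
    · simp only [List.sum_cons, List.length_cons]
      push_cast at hsum ⊢; omega
  · obtain ⟨hne, hall, hsum⟩ := hx
    rcases l with _ | ⟨a, t⟩
    · exact absurd rfl hne
    have ha : 2 ≤ a := hall a (by simp)
    have ht : ∀ x ∈ t, 2 ≤ x := fun x hx => hall x (by simp [hx])
    simp only [List.sum_cons, List.length_cons] at hsum
    by_cases ha2 : a = 2
    · subst ha2
      rcases t with _ | ⟨b, t⟩
      · simp only [List.sum_nil, List.length_nil] at hsum
        omega
      have hb : 2 ≤ b := ht b (by simp)
      have ht' : ∀ x ∈ t, 2 ≤ x := fun x hx => ht x (by simp [hx])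
      rw [gAuxInv_eq2]
      refine ⟨by simp, ?_, ?_⟩
      · intro x hx
        simp only [List.mem_cons] at hx
        rcases hx with rfl | rfl | hx
        · omega
        · omega
        · exact ht' x hx
      · simp only [List.sum_cons, List.length_cons] at hsum ⊢
        push_cast at hsum ⊢; omega
    · rw [gAuxInv_eq3 a t ha2]
      refine ⟨by simp, ?_, ?_⟩
      · intro x hx
        simp only [List.mem_cons] at hx
        rcases hx with rfl | rfl | hx
        · omega
        · omega
        · exact ht x hx
      · simp only [List.sum_cons, List.length_cons]
        push_cast at hsum ⊢; omega
  · obtain ⟨hne, hall, hsum⟩ := hx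
    rcases l with _ | ⟨a, t⟩
    · exact absurd rfl hne
    have ha : 2 ≤ a := hall a (by simp)
    have ht : ∀ x ∈ t, 2 ≤ x := fun x hx => hall x (by simp [hx])
    simp only [List.sum_cons, List.length_cons] at hsum
    rw [gAuxInv_eq4]
    refine ⟨by simp, ?_, ?_⟩
    · intro x hx
      simp only [List.mem_cons] at hx
      rcases hx with rfl | hx
      · omega
      · exact ht x hx
    · simp only [List.sum_cons, List.length_cons]
      push_cast at hsum ⊢; omega

lemma gAux_leftInv {c : ℕ} (hc : 5 ≤ c) :
    Set.LeftInvOn gAuxInv gAux (Tset c) := by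
  rintro l ⟨hne, hall, hsum⟩
  rcases l with _ | ⟨a, t⟩
  · exact absurd rfl hne
  rcases t with _ | ⟨b, t⟩
  · simp only [List.sum_cons, List.sum_nil, List.length_cons, List.length_nil] at hsum
    have ha : a = (c : ℤ) := by omega
    rw [gAux_eq4', gAuxInv_eq4]
    simp
  · have ha : 2 ≤ a := hall a (by simp)
    have hb : 2 ≤ b := hall b (by simp)
    by_cases ha2 : a = 2
    · subst ha2
      by_cases hb2 : b = 2
      · subst hb2; rw [gAux_eq1, gAuxInv_eq1]
      · rw [gAux_eq2 b t hb2, gAuxInv_eq2]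
        norm_num
    · by_cases ha3 : a = 3
      · subst ha3
        rw [gAux_eq3, gAuxInv_eq3 (b + 1) t (by omega)]
        norm_num
      · rw [gAux_eq4 a (b :: t) ha2 ha3, gAuxInv_eq4]
        norm_num

lemma gAux_rightInv {c : ℕ} (hc : 5 ≤ c) :
    Set.RightInvOn gAuxInv gAux (target c) := by
  rintro (l | l | l) hx
  · rw [gAuxInv_eq1, gAux_eq1]
  · obtain ⟨hne, hall, hsum⟩ := hx
    rcases l with _ | ⟨a, t⟩
    · exact absurd rfl hne
    have ha : 2 ≤ a := hall a (by simp)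
    simp only [List.sum_cons, List.length_cons] at hsum
    by_cases ha2 : a = 2
    · subst ha2
      rcases t with _ | ⟨b, t⟩
      · simp only [List.sum_nil, List.length_nil] at hsum
        omega
      rw [gAuxInv_eq2, gAux_eq2 (b + 1) t (by have := hall b (by simp); omega)]
      norm_num
    · rw [gAuxInv_eq3 a t ha2, gAux_eq3]
      norm_num
  · obtain ⟨hne, hall, hsum⟩ := hx
    rcases l with _ | ⟨a, t⟩
    · exact absurd rfl hne
    have ha : 2 ≤ a := hall a (by simp)
    rw [gAuxInv_eq4, gAux_eq4 (a + 2) t (by omega) (by omega)]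
    norm_num

lemma gAux_bijOn {c : ℕ} (hc : 5 ≤ c) : Set.BijOn gAux (Tset c) (target c) :=
  Set.InvOn.bijOn ⟨gAux_leftInv hc, gAux_rightInv hc⟩ (gAux_mapsTo hc) (gAuxInv_mapsTo hc)

lemma rev_bijOn (c : ℕ) : Set.BijOn List.reverse (Tset c) (Tset c) := by
  have hinv : Set.InvOn (List.reverse (α := ℤ)) List.reverse (Tset c) (Tset c) :=
    ⟨fun l _ => l.reverse_reverse, fun l _ => l.reverse_reverse⟩
  exact hinv.bijOn (fun l hl => Tset_reverse.mpr hl) (fun l hl => Tset_reverse.mpr hl)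

lemma sumMap_bijOn (c : ℕ) :
    Set.BijOn (Sum.map List.reverse (Sum.map List.reverse List.reverse)) (target c) (target c) := by
  have hinv : ∀ x : List ℤ ⊕ List ℤ ⊕ List ℤ,
      Sum.map List.reverse (Sum.map List.reverse List.reverse)
        (Sum.map List.reverse (Sum.map List.reverse List.reverse) x) = x := by
    rintro (l | l | l) <;> simp
  have hmap : Set.MapsTo (Sum.map List.reverse (Sum.map List.reverse List.reverse))
      (target c) (target c) := by
    rintro (l | l | l) hx <;> exact Tset_reverse.mpr hx
  exact Set.InvOn.bijOn ⟨fun x _ => hinv x, fun x _ => hinv x⟩ hmap hmap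

theorem g_bijection (c : ℕ) (hc : 5 ≤ c) : Set.BijOn g (Tset c) (target c) := by
  have hg : g = (Sum.map List.reverse (Sum.map List.reverse List.reverse)) ∘ gAux ∘ List.reverse := rfl
  rw [hg]
  exact (sumMap_bijOn c).comp ((gAux_bijOn hc).comp (rev_bijOn c))
end

section
/- For c ≥ 7, the solution of the recursion A(c) = A(c−2) + 2·A(c−4) + 3·2^{(c−5)/2} (for odd c ≥ 11) with A(7)=14 and A(9)=34, and A(c)=0 for c even, is given for odd c by A(c) = ((1+3d)/3)·2^{d−1} − (2/3)·(−1)^d where d = (c−1)/2. -/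
theorem A_closed_form (A : ℕ → ℚ) (h7 : A 7 = 14) (h9 : A 9 = 34)
    (heven : ∀ c : ℕ, Even c → A c = 0)
    (hrec : ∀ c : ℕ, Odd c → 11 ≤ c →
      A c = A (c - 2) + 2 * A (c - 4) + 3 * 2 ^ ((c - 5) / 2)) :
    ∀ c : ℕ, Odd c → 7 ≤ c →
      A c = ((1 + 3 * (((c - 1) / 2 : ℕ) : ℚ)) / 3) * 2 ^ ((c - 1) / 2 - 1)
        - (2 / 3) * (-1 : ℚ) ^ ((c - 1) / 2) := by
  intro c
  induction c using Nat.strong_induction_on with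
  | _ c ih =>
    intro hodd hc
    rcases hodd with ⟨d, rfl⟩
    -- c = 2d+1, d ≥ 3
    have hd : 3 ≤ d := by omega
    rcases eq_or_lt_of_le hd with h3 | h4
    · -- d = 3, c = 7
      have : d = 3 := h3.symm
      subst this
      norm_num [h7]
    rcases eq_or_lt_of_le (Nat.succ_le_of_lt h4) with h4' | h5
    · -- d = 4, c = 9
      have : d = 4 := h4'.symm
      subst this
      norm_num [h9]
    · -- d ≥ 5
      have hd5 : 5 ≤ d := h5
      obtain ⟨e, rfl⟩ : ∃ e, d = e + 5 := ⟨d - 5, by omega⟩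
      have hrec' := hrec (2 * (e + 5) + 1) ⟨e + 5, by ring⟩ (by omega)
      have h1 := ih (2 * (e + 5) + 1 - 2) (by omega) ⟨e + 4, by omega⟩ (by omega)
      have h2 := ih (2 * (e + 5) + 1 - 4) (by omega) ⟨e + 3, by omega⟩ (by omega)
      have e1 : 2 * (e + 5) + 1 - 2 = 2 * (e + 4) + 1 := by omega
      have e2 : 2 * (e + 5) + 1 - 4 = 2 * (e + 3) + 1 := by omega
      rw [e1] at h1 hrec'
      rw [e2] at h2 hrec'
      have q1 : (2 * (e + 5) + 1 - 1) / 2 = e + 5 := by omega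
      have q2 : (2 * (e + 4) + 1 - 1) / 2 = e + 4 := by omega
      have q3 : (2 * (e + 3) + 1 - 1) / 2 = e + 3 := by omega
      have q4 : (2 * (e + 5) + 1 - 5) / 2 = e + 3 := by omega
      rw [q1]
      rw [q2] at h1
      rw [q3] at h2
      rw [q4] at hrec'
      rw [hrec', h1, h2]
      have p1 : e + 5 - 1 = e + 4 := by omega
      have p2 : e + 4 - 1 = e + 3 := by omega
      have p3 : e + 3 - 1 = e + 2 := by omega
      rw [p1, p2, p3]
      push_cast
      ring
end
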